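/- Let n be a positive natural number and for each k_x ∈ ℝ define the 2n×2n complex block matrix M(k_x) = fromBlocks 0 1 (exp(i k_x) • 1) 0, i.e. the block matrix with zero diagonal n×n blocks, identity upper-right block, and e^{i k_x} times the identity as lower-left block. Let W : ℝ → ℝ → Matrix (Fin n ⊕ Fin n) (Fin n ⊕ Fin n) ℂ be a family of matrices satisfying the magnetic-translation constraint W(k_x, k_y + π) = W(k_x, k_y) * M(k_x) for all k_x, k_y ∈ ℝ, and suppose (det W(0,0))² = 1 and (det W(π,0))² = 1. Then det W(0,0) · det W(0,π) · det W(π,0) · det W(π,π) = (-1)^n. In particular, if n is odd, the product of the determinants of W over the four time-reversal-invariant momenta (0,0), (0,π), (π,0), (π,π) equals -1. (This proves that for free fermions with an odd number n of Majorana modes per unit cell and π flux per unit cell, any gapped Bloch band structure has odd class-D topological index ν, hence is a topological superconductor.) -/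

import Mathlib

open Matrix Complex Real

/-- The magnetic translation matrix `M(k_x)`: block matrix with zero diagonal
n×n blocks, identity upper-right block and e^{i k_x}·1 lower-left block. -/
noncomputable def magTransBlock (n : ℕ) (kx : ℝ) :
    Matrix (Fin n ⊕ Fin n) (Fin n ⊕ Fin n) ℂ :=
  Matrix.fromBlocks 0 1 (Complex.exp (Complex.I * kx) • 1) 0

lemma det_magTransBlock (n : ℕ) (kx : ℝ) :
    (magTransBlock n kx).det = (-1 : ℂ) ^ n * Complex.exp (Complex.I * kx) ^ n := by
  set c : ℂ := Complex.exp (Complex.I * kx) with hc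
  have hmul : magTransBlock n kx * Matrix.fromBlocks 1 0 1 1 =
      Matrix.fromBlocks 1 1 (c • (1 : Matrix (Fin n) (Fin n) ℂ)) 0 := by
    simp [magTransBlock, Matrix.fromBlocks_multiply, hc]
  have hdet1 : (Matrix.fromBlocks (1 : Matrix (Fin n) (Fin n) ℂ) 0
      (1 : Matrix (Fin n) (Fin n) ℂ) 1).det = 1 := by
    rw [Matrix.det_fromBlocks_zero₁₂]; simp
  have h2 : (magTransBlock n kx).det *
      (Matrix.fromBlocks (1 : Matrix (Fin n) (Fin n) ℂ) 0
        (1 : Matrix (Fin n) (Fin n) ℂ) 1).det =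
      (Matrix.fromBlocks 1 1 (c • (1 : Matrix (Fin n) (Fin n) ℂ)) 0).det := by
    rw [← Matrix.det_mul, hmul]
  rw [hdet1, mul_one] at h2
  haveI : Invertible (1 : Matrix (Fin n) (Fin n) ℂ) := invertibleOne
  rw [h2, Matrix.det_fromBlocks₁₁]
  have h3 : (0 : Matrix (Fin n) (Fin n) ℂ) - c • 1 * ⅟1 * 1 = (-c) • 1 := by
    simp [neg_smul]
  rw [h3, Matrix.det_smul]
  simp only [Fintype.card_fin, Matrix.det_one, mul_one, one_mul]
  exact neg_pow c n

/-- For free fermions with n Majorana modes per unit cell and π flux per unit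
cell, the magnetic-translation constraint on the Bloch wavefunctions W forces
the product of det W over the four time-reversal-invariant momenta to equal
(-1)^n; for n odd this is -1, i.e. the class-D index ν is odd and any gapped
band structure is a topological superconductor. -/
theorem class_D_free_fermion_LSM (n : ℕ) (hn : 0 < n)
    (W : ℝ → ℝ → Matrix (Fin n ⊕ Fin n) (Fin n ⊕ Fin n) ℂ)
    (hW : ∀ kx ky : ℝ, W kx (ky + π) = W kx ky * magTransBlock n kx)
    (h00 : (W 0 0).det ^ 2 = 1)
    (hπ0 : (W π 0).det ^ 2 = 1) :
    (W 0 0).det * (W 0 π).det * (W π 0).det * (W π π).det = (-1 : ℂ) ^ n := by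
  have e0 : W 0 π = W 0 0 * magTransBlock n 0 := by
    have := hW 0 0; rwa [zero_add] at this
  have eπ : W π π = W π 0 * magTransBlock n π := by
    have := hW π 0; rwa [zero_add] at this
  have d0 : (magTransBlock n 0).det = (-1 : ℂ) ^ n := by
    rw [det_magTransBlock]; simp
  have dπ : (magTransBlock n π).det = 1 := by
    rw [det_magTransBlock]
    have : Complex.exp (Complex.I * (π : ℝ)) = -1 := by
      rw [mul_comm]; exact_mod_cast Complex.exp_pi_mul_I
    rw [this, ← mul_pow]; simp
  rw [e0, eπ, Matrix.det_mul, Matrix.det_mul, d0, dπ, mul_one]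
  have : (W 0 0).det * ((W 0 0).det * (-1 : ℂ) ^ n) * (W π 0).det * (W π 0).det =
      (W 0 0).det ^ 2 * (W π 0).det ^ 2 * (-1 : ℂ) ^ n := by ring
  rw [this, h00, hπ0, one_mul, one_mul]
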